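/- Let P ∈ ℤ[x] be a polynomial of degree d ≥ 1 with positive leading coefficient. Suppose an invertible affine map L(x) = f·x + h on ℂ permutes the multiset of complex roots of P (i.e., a·P(L(x)) = b·P(x) for distinct positive integers a, b, where f^d = b/a). Then P has at most one distinct complex root. -/

import Mathlib

open Polynomial

theorem stmt_2 (P : Polynomial ℤ) (hd : 1 ≤ P.natDegree) (hlc : 0 < P.leadingCoeff)
    (a b : ℕ) (ha : 0 < a) (hb : 0 < b) (hab : a ≠ b) (f h : ℂ) (hf : f ≠ 0)
    (hid : (a : ℂ) • (P.map (Int.castRingHom ℂ)).comp (C f * X + C h)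
          = (b : ℂ) • P.map (Int.castRingHom ℂ)) :
    (P.map (Int.castRingHom ℂ)).roots.toFinset.card ≤ 1 := by
  set Q := P.map (Int.castRingHom ℂ) with hQdef
  have hP0 : P ≠ 0 := fun h0 => by simp [h0] at hlc
  have hQ0 : Q ≠ 0 := by
    rw [hQdef]
    exact (Polynomial.map_ne_zero_iff (f := Int.castRingHom ℂ)
      Int.cast_injective).mpr hP0
  have hlcQ : Q.leadingCoeff ≠ 0 := leadingCoeff_ne_zero.mpr hQ0
  have hdeg : Q.natDegree = P.natDegree :=
    natDegree_map_eq_of_injective Int.cast_injective P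
  have hlin : (C f * X + C h).natDegree = 1 := natDegree_linear hf
  have ha0 : (a : ℂ) ≠ 0 := Nat.cast_ne_zero.mpr ha.ne'
  -- leading coefficient comparison
  have key : (a : ℂ) * f ^ Q.natDegree = (b : ℂ) := by
    have hc := congrArg leadingCoeff hid
    rw [smul_eq_C_mul, smul_eq_C_mul, leadingCoeff_mul, leadingCoeff_mul,
      leadingCoeff_C, leadingCoeff_C,
      leadingCoeff_comp (by rw [hlin]; norm_num), leadingCoeff_linear hf] at hc
    have : ((a : ℂ) * f ^ Q.natDegree) * Q.leadingCoeff
        = (b : ℂ) * Q.leadingCoeff := by ring_nf; ring_nf at hc; linear_combination hc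
    exact mul_right_cancel₀ hlcQ this
  have habs : (a : ℝ) * ‖f‖ ^ Q.natDegree = (b : ℝ) := by
    have := congrArg (‖·‖) key
    simpa [norm_mul, norm_pow] using this
  have hfabs : ‖f‖ ≠ 1 := by
    intro h1
    rw [h1, one_pow, mul_one] at habs
    exact hab (by exact_mod_cast habs)
  have hf1 : f ≠ 1 := fun h1 => by simp [h1] at hfabs
  set c : ℂ := h / (1 - f) with hcdef
  have hfix : f * c + h = c := by
    have : (1 : ℂ) - f ≠ 0 := sub_ne_zero.mpr (Ne.symm hf1)
    rw [hcdef]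
    field_simp
    ring
  have hdiff : ∀ z : ℂ, f * z + h - c = f * (z - c) := by
    intro z
    calc f * z + h - c = f * z + h - (f * c + h) := by rw [hfix]
    _ = f * (z - c) := by ring
  set S := Q.roots.toFinset with hSdef
  -- S is closed under z ↦ f z + h
  have hclosed : ∀ z ∈ S, f * z + h ∈ S := by
    intro z hz
    rw [hSdef, Multiset.mem_toFinset, mem_roots hQ0] at hz ⊢
    have hc := congrArg (eval z) hid
    simp only [eval_smul, eval_comp, eval_add, eval_mul, eval_C, eval_X,
      smul_eq_mul] at hc
    have hz' : eval z Q = 0 := hz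
    rw [hz', mul_zero] at hc
    show eval (f * z + h) Q = 0
    rcases mul_eq_zero.mp hc with h' | h'
    · exact absurd h' ha0
    · exact h'
  have hinj : Function.Injective (fun z : ℂ => f * z + h) := by
    intro x y hxy
    simp only at hxy
    exact mul_left_cancel₀ hf (by linear_combination hxy)
  have himg : S.image (fun z : ℂ => f * z + h) = S := by
    apply Finset.eq_of_subset_of_card_le
    · intro z hz
      rcases Finset.mem_image.mp hz with ⟨w, hw, rfl⟩
      exact hclosed w hw
    · rw [Finset.card_image_of_injective _ hinj]
  rcases S.eq_empty_or_nonempty with hS | hS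
  · simp [hS]
  -- take the root farthest from c
  obtain ⟨z, hzS, hzmax⟩ := S.exists_max_image (fun z => ‖z - c‖) hS
  have hM0 : ‖z - c‖ = 0 := by
    rcases lt_or_gt_of_ne hfabs with hlt | hgt
    · -- |f| < 1 : z is in the image
      obtain ⟨w, hwS, hwz⟩ := Finset.mem_image.mp (himg ▸ hzS)
      have h1 : ‖z - c‖ = ‖f‖ * ‖w - c‖ := by
        rw [← hwz, hdiff, norm_mul]
      have h2 : ‖w - c‖ ≤ ‖z - c‖ := hzmax w hwS
      have h3 : (0:ℝ) ≤ ‖z - c‖ := norm_nonneg _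
      nlinarith [norm_nonneg (w - c), mul_le_mul_of_nonneg_left h2 (norm_nonneg f)]
    · -- |f| > 1 : image of z is in S
      have h1 : ‖f * z + h - c‖ ≤ ‖z - c‖ :=
        hzmax _ (hclosed z hzS)
      rw [hdiff, norm_mul] at h1
      nlinarith [norm_nonneg (z - c)]
  have hall : ∀ w ∈ S, w = c := by
    intro w hw
    have := hzmax w hw
    rw [hM0] at this
    have h0 : ‖w - c‖ = 0 :=
      le_antisymm this (norm_nonneg _)
    have := norm_eq_zero.mp h0
    linear_combination this
  apply Finset.card_le_one.mpr
  intro x hx y hy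
  rw [hall x hx, hall y hy]
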